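/- Let S ⊆ ℕ be an infinite set of natural density zero, and let x ∈ ℝ with d⁻(x, 0) = c (respectively d⁺(x,0) = c), where d⁻, d⁺ denote lower/upper frequency of the digit 0 in the binary expansion of x. Then d⁻(x + Σ_{j∈S} 2^{−j}, 0) ≥ c (respectively d⁺(x + Σ_{j∈S} 2^{−j}, 0) ≥ c). -/

import Mathlib

open Filter

/-- The i-th fractional binary digit of `x` in the lexicographically minimal
binary expansion (for dyadic rationals, the expansion ending in ones). -/
noncomputable def minBinDigit (x : ℝ) (i : ℕ) : ℤ :=
  ⌈x * 2 ^ i⌉ - 2 * ⌈x * 2 ^ (i - 1)⌉ + 1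

/-- Number of indices 1 ≤ i ≤ k whose binary digit of `x` equals `j`. -/
noncomputable def digitCount (x : ℝ) (j : ℤ) (k : ℕ) : ℕ :=
  ((Finset.Icc 1 k).filter fun i => minBinDigit x i = j).card

/-- Upper frequency of digit `j` in the binary expansion of `x`. -/
noncomputable def dPlus (x : ℝ) (j : ℤ) : ℝ :=
  limsup (fun k : ℕ => (digitCount x j k : ℝ) / k) atTop

/-- Lower frequency of digit `j` in the binary expansion of `x`. -/
noncomputable def dMinus (x : ℝ) (j : ℤ) : ℝ :=
  liminf (fun k : ℕ => (digitCount x j k : ℝ) / k) atTop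

namespace Stmt9Aux

variable (S : Set ℕ) [DecidablePred (· ∈ S)]

noncomputable def y : ℝ := ∑' j : S, (2 : ℝ) ^ (-(j : ℤ))

noncomputable def A (i : ℕ) : ℤ :=
  ∑ j ∈ (Finset.range (i + 1)).filter (· ∈ S), 2 ^ (i - j)

noncomputable def r (i : ℕ) : ℝ := y S * 2 ^ i - A S i

lemma hsummable (i : ℕ) : Summable (fun j : ℕ => (2 : ℝ) ^ ((i : ℤ) - j)) := by
  have : (fun j : ℕ => (2 : ℝ) ^ ((i : ℤ) - j)) = fun j : ℕ => (2:ℝ)^(i:ℤ) * (1/2) ^ j := by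
    funext j
    rw [zpow_sub₀ (by norm_num : (2:ℝ) ≠ 0)]
    rw [zpow_natCast]
    field_simp
    rw [zpow_natCast, ← mul_pow]; norm_num
  rw [this]
  exact (summable_geometric_of_lt_one (by norm_num) (by norm_num)).mul_left _

lemma hsummable_ind (i : ℕ) :
    Summable (fun j : ℕ => if j ∈ S then (2 : ℝ) ^ ((i : ℤ) - j) else 0) := by
  have := (hsummable i).indicator S
  convert this using 1
  · rfl
  funext j
  simp [Set.indicator_apply]

lemma y_mul (i : ℕ) :
    y S * 2 ^ i = ∑' j : ℕ, (if j ∈ S then (2 : ℝ) ^ ((i : ℤ) - j) else 0) := by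
  rw [y, tsum_subtype S (fun j : ℕ => (2 : ℝ) ^ (-(j : ℤ))), ← tsum_mul_right]
  congr 1
  funext j
  rw [Set.indicator_apply]
  split_ifs with h
  · rw [zpow_sub₀ (by norm_num : (2:ℝ) ≠ 0), zpow_natCast]
    field_simp [zpow_neg]
    rw [← zpow_add₀ (by norm_num : (2:ℝ) ≠ 0)]; simp
  · simp

lemma r_eq (i : ℕ) :
    r S i = ∑' m : ℕ, (if (m + i + 1) ∈ S then (2 : ℝ) ^ (-(m + 1 : ℤ)) else 0) := by
  have hsum := hsummable_ind S i
  have hsplit := Summable.sum_add_tsum_nat_add (i + 1) hsum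
  have hA : ∑ j ∈ Finset.range (i + 1), (if j ∈ S then (2 : ℝ) ^ ((i : ℤ) - j) else 0)
      = (A S i : ℝ) := by
    rw [A]
    push_cast
    rw [Finset.sum_filter]
    apply Finset.sum_congr rfl
    intro j hj
    have hji : j ≤ i := Nat.lt_succ_iff.mp (Finset.mem_range.mp hj)
    split_ifs with h
    · rw [← zpow_natCast (2:ℝ), Nat.cast_sub hji]
    · rfl
  have : r S i = y S * 2 ^ i - A S i := rfl
  rw [this, y_mul, ← hsplit, hA, add_sub_cancel_left]
  apply tsum_congr
  intro m
  have h1 : m + (i + 1) = m + i + 1 := by omega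
  rw [h1]
  congr 1
  push_cast
  ring_nf

lemma two_zpow_neg (m : ℕ) : (2:ℝ) ^ (-(m + 1 : ℤ)) = (1/2) * (1/2)^m := by
  rw [show -((m:ℤ)+1) = -((m+1:ℕ):ℤ) by push_cast; ring, zpow_neg, zpow_natCast, pow_succ]
  rw [one_div, mul_inv, inv_pow]
  ring

lemma hsummable_tail (i : ℕ) :
    Summable (fun m : ℕ => if (m + i + 1) ∈ S then (2 : ℝ) ^ (-(m + 1 : ℤ)) else 0) := by
  apply Summable.of_nonneg_of_le (fun m => ?_) (fun m => ?_)
    ((summable_geometric_of_lt_one (by norm_num : (0:ℝ) ≤ 1/2) (by norm_num)).mul_left (1/2))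
  · positivity
  · split_ifs with h
    · exact le_of_eq (two_zpow_neg m)
    · positivity

lemma r_pos (hS : S.Infinite) (i : ℕ) : 0 < r S i := by
  obtain ⟨j, hjS, hji⟩ := hS.exists_gt i
  set m := j - (i + 1) with hm
  have hj : m + i + 1 = j := by omega
  rw [r_eq]
  calc (0:ℝ) < (if (m + i + 1) ∈ S then (2 : ℝ) ^ (-(m + 1 : ℤ)) else 0) := by
        rw [hj, if_pos hjS]; positivity
    _ ≤ _ := Summable.le_tsum (hsummable_tail S i) m (fun b _ => by positivity)

lemma r_le_one (i : ℕ) : r S i ≤ 1 := by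
  rw [r_eq]
  have h1 : ∑' m : ℕ, ((1:ℝ)/2) * (1/2)^m = 1 := by
    rw [tsum_mul_left, tsum_geometric_of_lt_one (by norm_num) (by norm_num)]
    norm_num
  rw [← h1]
  apply Summable.tsum_le_tsum _ (hsummable_tail S i)
    ((summable_geometric_of_lt_one (by norm_num : (0:ℝ) ≤ 1/2) (by norm_num)).mul_left (1/2))
  intro m
  split_ifs with h
  · rw [two_zpow_neg]
  · positivity

lemma A_rec (i : ℕ) : A S (i + 1) = 2 * A S i + (if (i + 1) ∈ S then 1 else 0) := by
  rw [A, A, Finset.sum_filter, Finset.sum_filter, Finset.sum_range_succ]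
  have : ∀ j ∈ Finset.range (i + 1),
      (if j ∈ S then (2:ℤ) ^ (i + 1 - j) else 0) = 2 * (if j ∈ S then (2:ℤ) ^ (i - j) else 0) := by
    intro j hj
    have hji : j ≤ i := Nat.lt_succ_iff.mp (Finset.mem_range.mp hj)
    split_ifs with h
    · rw [show i + 1 - j = (i - j) + 1 by omega, pow_succ]; ring
    · ring
  rw [Finset.sum_congr rfl this, ← Finset.mul_sum]
  simp

lemma r_rec (i : ℕ) : r S (i + 1) = 2 * r S i - (if (i + 1) ∈ S then 1 else 0) := by
  rw [r, r, A_rec]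
  push_cast
  split_ifs <;> ring

noncomputable def E (x : ℝ) (i : ℕ) : ℤ := ⌈x * 2 ^ i + r S i⌉ - ⌈x * 2 ^ i⌉

variable {S}

lemma E_nonneg (hS : S.Infinite) (x : ℝ) (i : ℕ) : 0 ≤ E S x i := by
  have := r_pos S hS i
  have : ⌈x * 2 ^ i⌉ ≤ ⌈x * 2 ^ i + r S i⌉ := Int.ceil_le_ceil (by linarith)
  simp only [E]; omega

lemma E_le_one (x : ℝ) (i : ℕ) : E S x i ≤ 1 := by
  have h1 := r_le_one S i
  have h2 := Int.le_ceil (x * 2 ^ i)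
  have : ⌈x * 2 ^ i + r S i⌉ ≤ ⌈x * 2 ^ i⌉ + 1 := by
    rw [show (⌈x * 2 ^ i⌉ + 1 : ℤ) = ((⌈x * 2 ^ i⌉ + 1 : ℤ) : ℤ) from rfl]
    apply Int.ceil_le.mpr
    push_cast
    linarith
  simp only [E]; omega

lemma E_eq_zero_iff (hS : S.Infinite) (x : ℝ) (i : ℕ) :
    E S x i = 0 ↔ x * 2 ^ i + r S i ≤ (⌈x * 2 ^ i⌉ : ℝ) := by
  constructor
  · intro h
    have : ⌈x * 2 ^ i + r S i⌉ = ⌈x * 2 ^ i⌉ := by simp only [E] at h; omega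
    calc x * 2 ^ i + r S i ≤ (⌈x * 2 ^ i + r S i⌉ : ℝ) := Int.le_ceil _
      _ = _ := by rw [this]
  · intro h
    have h1 : ⌈x * 2 ^ i + r S i⌉ ≤ ⌈x * 2 ^ i⌉ := Int.ceil_le.mpr h
    have h2 := E_nonneg hS x i
    simp only [E] at h2 ⊢; omega

lemma ceil_two_mul_le (t : ℝ) : ⌈t * 2⌉ ≤ 2 * ⌈t⌉ := by
  apply Int.ceil_le.mpr
  push_cast
  have := Int.le_ceil t
  linarith

lemma pow_succ_real (x : ℝ) (m : ℕ) : x * 2 ^ (m + 1) = (x * 2 ^ m) * 2 := by ring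

/-- Lemma A : if `m+1 ∉ S` and the (m+1)-th digit of x is 0, then E m = 0. -/
lemma lemA (hS : S.Infinite) {x : ℝ} {m : ℕ} (hm : (m + 1) ∉ S)
    (hd : minBinDigit x (m + 1) = 0) : E S x m = 0 := by
  have hb : ⌈x * 2 ^ (m + 1)⌉ = 2 * ⌈x * 2 ^ m⌉ - 1 := by
    simp only [minBinDigit, Nat.add_sub_cancel] at hd
    omega
  have hle : x * 2 ^ (m + 1) ≤ (⌈x * 2 ^ (m+1)⌉ : ℝ) := Int.le_ceil _
  rw [hb] at hle
  push_cast at hle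
  rw [pow_succ_real] at hle
  have hr : r S m ≤ 1/2 := by
    have := r_rec S m
    rw [if_neg hm] at this
    have := r_le_one S (m + 1)
    linarith [r_le_one S (m+1), r_rec S m]
  rw [E_eq_zero_iff hS]
  linarith

/-- Lemma B : a carry-drop can only happen at an element of S. -/
lemma lemB (hS : S.Infinite) {x : ℝ} {m : ℕ} (h1 : E S x m = 1) (h0 : E S x (m + 1) = 0) :
    (m + 1) ∈ S := by
  by_contra hm
  have hgt : (⌈x * 2 ^ m⌉ : ℝ) < x * 2 ^ m + r S m := by
    by_contra hle
    push_neg at hle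
    have := (E_eq_zero_iff hS x m).mpr hle
    omega
  have hrec : r S (m + 1) = 2 * r S m := by
    have := r_rec S m
    rw [if_neg hm] at this
    linarith
  have h2 : x * 2 ^ (m + 1) + r S (m + 1) ≤ (⌈x * 2 ^ (m+1)⌉ : ℝ) :=
    (E_eq_zero_iff hS x (m+1)).mp h0
  have h3 := ceil_two_mul_le (x * 2 ^ m)
  rw [← pow_succ_real] at h3
  have h3' : (⌈x * 2 ^ (m+1)⌉ : ℝ) ≤ 2 * (⌈x * 2 ^ m⌉ : ℝ) := by exact_mod_cast h3
  rw [hrec] at h2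
  have hx : x * 2 ^ (m + 1) = x * 2 ^ m * 2 := by ring
  linarith

lemma digit_bounds (z : ℝ) (m : ℕ) :
    2 * ⌈z * 2 ^ m⌉ - 1 ≤ ⌈z * 2 ^ (m + 1)⌉ ∧ ⌈z * 2 ^ (m + 1)⌉ ≤ 2 * ⌈z * 2 ^ m⌉ := by
  constructor
  · have h1 : (⌈z * 2 ^ m⌉ : ℝ) - 1 < z * 2 ^ m := by
      have := Int.ceil_lt_add_one (z * 2 ^ m); linarith
    have : ((2 * ⌈z * 2 ^ m⌉ - 2 : ℤ) : ℝ) < z * 2 ^ (m + 1) := by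
      push_cast
      rw [pow_succ_real]
      linarith
    have := Int.lt_ceil.mpr this
    omega
  · have := ceil_two_mul_le (z * 2 ^ m)
    rw [← pow_succ_real] at this
    exact this

lemma digit_zero_iff (z : ℝ) (m : ℕ) :
    minBinDigit z (m + 1) = 0 ↔ Odd ⌈z * 2 ^ (m + 1)⌉ := by
  obtain ⟨h1, h2⟩ := digit_bounds z m
  simp only [minBinDigit, Nat.add_sub_cancel]
  rw [Int.odd_iff]
  omega

lemma A_even {m : ℕ} (hm : (m + 1) ∉ S) : Even (A S (m + 1)) := by
  rw [A_rec S m, if_neg hm]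
  exact ⟨A S m, by ring⟩

lemma ceil_shift (x : ℝ) (i : ℕ) : ⌈(x + y S) * 2 ^ i⌉ = A S i + ⌈x * 2 ^ i + r S i⌉ := by
  have : (x + y S) * 2 ^ i = (x * 2 ^ i + r S i) + (A S i : ℝ) := by
    rw [r]; ring
  rw [this, Int.ceil_add_intCast]
  ring

/-- The change lemma: if digit flips from 0 to nonzero at m+1 ∉ S, then E (m+1) = 1. -/
lemma lemC (hS : S.Infinite) {x : ℝ} {m : ℕ} (hm : (m + 1) ∉ S)
    (hd : minBinDigit x (m + 1) = 0) (hd' : minBinDigit (x + y S) (m + 1) ≠ 0) :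
    E S x (m + 1) = 1 := by
  have h1 : Odd ⌈x * 2 ^ (m + 1)⌉ := (digit_zero_iff x m).mp hd
  have h2 : ¬ Odd ⌈(x + y S) * 2 ^ (m + 1)⌉ := fun h => hd' ((digit_zero_iff _ m).mpr h)
  rw [ceil_shift] at h2
  have hA := A_even hm
  have hE0 := E_nonneg hS x (m + 1)
  have hE1 := E_le_one (S := S) x (m + 1)
  have hEdef : ⌈x * 2 ^ (m+1) + r S (m+1)⌉ = ⌈x * 2 ^ (m+1)⌉ + E S x (m+1) := by
    simp only [E]; ring
  rw [hEdef] at h2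
  rw [Int.odd_iff] at h1 h2
  rw [Int.even_iff] at hA
  omega

lemma key (hS : S.Infinite) (x : ℝ) (k : ℕ) :
    digitCount x 0 k ≤ digitCount (x + y S) 0 k
      + 2 * ((Finset.Icc 1 k).filter (· ∈ S)).card + 1 := by
  classical
  set x' := x + y S with hx'
  set Sk := (Finset.Icc 1 k).filter (· ∈ S) with hSk
  set T := (Finset.range k).filter (fun m => E S x m = 0 ∧ E S x (m+1) = 1) with hT
  set D := (Finset.range k).filter (fun m => E S x m = 1 ∧ E S x (m+1) = 0) with hD
  set B := (Finset.Icc 1 k).filter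
    (fun i => minBinDigit x i = 0 ∧ minBinDigit x' i ≠ 0) with hB
  -- step 1 : digitCount x 0 k ≤ digitCount x' 0 k + B.card
  have step1 : digitCount x 0 k ≤ digitCount x' 0 k + B.card := by
    have hsub : (Finset.Icc 1 k).filter (fun i => minBinDigit x i = 0)
        ⊆ ((Finset.Icc 1 k).filter (fun i => minBinDigit x' i = 0)) ∪ B := by
      intro i hi
      rw [Finset.mem_filter] at hi
      rw [Finset.mem_union, Finset.mem_filter, Finset.mem_filter]
      by_cases h : minBinDigit x' i = 0
      · exact Or.inl ⟨hi.1, h⟩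
      · exact Or.inr ⟨hi.1, hi.2, h⟩
    calc digitCount x 0 k
        ≤ (((Finset.Icc 1 k).filter (fun i => minBinDigit x' i = 0)) ∪ B).card := by
          rw [digitCount]; exact Finset.card_le_card hsub
      _ ≤ digitCount x' 0 k + B.card := by
          rw [digitCount]; exact Finset.card_union_le _ _
  -- step 2 : B.card ≤ Sk.card + T.card
  have step2 : B.card ≤ Sk.card + T.card := by
    have hsub : B ⊆ Sk ∪ T.image (· + 1) := by
      intro i hi
      rw [hB, Finset.mem_filter, Finset.mem_Icc] at hi
      obtain ⟨⟨hi1, hik⟩, hd, hd'⟩ := hi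
      rw [Finset.mem_union]
      by_cases hiS : i ∈ S
      · exact Or.inl (Finset.mem_filter.mpr ⟨Finset.mem_Icc.mpr ⟨hi1, hik⟩, hiS⟩)
      · right
        obtain ⟨m, rfl⟩ : ∃ m, i = m + 1 := ⟨i - 1, by omega⟩
        refine Finset.mem_image.mpr ⟨m, ?_, rfl⟩
        rw [hT, Finset.mem_filter, Finset.mem_range]
        exact ⟨by omega, lemA hS hiS hd, lemC hS hiS hd hd'⟩
    calc B.card ≤ (Sk ∪ T.image (· + 1)).card := Finset.card_le_card hsub
      _ ≤ Sk.card + (T.image (· + 1)).card := Finset.card_union_le _ _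
      _ ≤ Sk.card + T.card := by
          exact Nat.add_le_add_left (Finset.card_image_le) _
  -- step 3 : T.card ≤ D.card + 1
  have step3 : T.card ≤ D.card + 1 := by
    have htel : ∑ m ∈ Finset.range k, (E S x (m+1) - E S x m) = E S x k - E S x 0 :=
      Finset.sum_range_sub _ _
    have hterm : ∀ m ∈ Finset.range k, (E S x (m+1) - E S x m)
        = (if E S x m = 0 ∧ E S x (m+1) = 1 then (1:ℤ) else 0)
          - (if E S x m = 1 ∧ E S x (m+1) = 0 then (1:ℤ) else 0) := by
      intro m _
      have h0 := E_nonneg hS x m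
      have h1 := E_le_one (S := S) x m
      have h0' := E_nonneg hS x (m+1)
      have h1' := E_le_one (S := S) x (m+1)
      split_ifs with hc1 hc2 hc2 <;> omega
    rw [Finset.sum_congr rfl hterm, Finset.sum_sub_distrib,
        Finset.sum_boole, Finset.sum_boole] at htel
    have hk0 := E_nonneg hS x k
    have hk1 := E_le_one (S := S) x k
    have h00 := E_nonneg hS x 0
    have h01 := E_le_one (S := S) x 0
    rw [← hT, ← hD] at htel
    omega
  -- step 4 : D.card ≤ Sk.card
  have step4 : D.card ≤ Sk.card := by
    apply Finset.card_le_card_of_injOn (fun m => m + 1)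
    · intro m hm
      rw [hD, Finset.mem_coe, Finset.mem_filter, Finset.mem_range] at hm
      beta_reduce
      rw [hSk, Finset.mem_coe, Finset.mem_filter, Finset.mem_Icc]
      exact ⟨⟨by omega, by omega⟩, lemB hS hm.2.1 hm.2.2⟩
    · intro a _ b _ h
      have : a + 1 = b + 1 := h
      omega
  omega

lemma real_le_of_forall_pos {a b : ℝ} (h : ∀ ε : ℝ, 0 < ε → a ≤ b + ε) : a ≤ b := by
  by_contra hlt
  push_neg at hlt
  have := h ((a - b)/2) (by linarith)
  linarith

lemma lim_compare (f g e : ℕ → ℝ) (hfg : ∀ k, g k ≤ f k + e k)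
    (he : Tendsto e atTop (nhds 0))
    (hf0 : ∀ k, 0 ≤ f k) (hf1 : ∀ k, f k ≤ 1)
    (hg0 : ∀ k, 0 ≤ g k) (hg1 : ∀ k, g k ≤ 1) :
    liminf g atTop ≤ liminf f atTop ∧ limsup g atTop ≤ limsup f atTop := by
  have hfba : IsBoundedUnder (· ≤ ·) atTop f := isBoundedUnder_of ⟨1, hf1⟩
  have hfbb : IsBoundedUnder (· ≥ ·) atTop f := isBoundedUnder_of ⟨0, hf0⟩
  have hgba : IsBoundedUnder (· ≤ ·) atTop g := isBoundedUnder_of ⟨1, hg1⟩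
  have hgbb : IsBoundedUnder (· ≥ ·) atTop g := isBoundedUnder_of ⟨0, hg0⟩
  constructor
  · apply real_le_of_forall_pos
    intro ε hε
    have hev : ∀ᶠ k in atTop, e k ≤ ε := he.eventually (eventually_le_nhds hε)
    have hgf : ∀ᶠ k in atTop, g k ≤ f k + ε := by
      filter_upwards [hev] with k hk
      linarith [hfg k]
    have hfε_ba : IsBoundedUnder (· ≤ ·) atTop (fun k => f k + ε) :=
      isBoundedUnder_of ⟨1 + ε, fun k => by linarith [hf1 k]⟩
    have hfε_bb : IsBoundedUnder (· ≥ ·) atTop (fun k => f k + ε) :=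
      isBoundedUnder_of ⟨0 + ε, fun k => by simp; linarith [hf0 k]⟩
    have h1 : liminf g atTop ≤ liminf (fun k => f k + ε) atTop :=
      liminf_le_liminf hgf hgbb hfε_ba.isCoboundedUnder_ge
    have h2 : liminf (fun k => f k + ε) atTop = liminf f atTop + ε :=
      liminf_add_const atTop f ε hfba.isCoboundedUnder_ge hfbb
    linarith
  · apply real_le_of_forall_pos
    intro ε hε
    have hev : ∀ᶠ k in atTop, e k ≤ ε := he.eventually (eventually_le_nhds hε)
    have hgf : ∀ᶠ k in atTop, g k ≤ f k + ε := by
      filter_upwards [hev] with k hk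
      linarith [hfg k]
    have hfε_ba : IsBoundedUnder (· ≤ ·) atTop (fun k => f k + ε) :=
      isBoundedUnder_of ⟨1 + ε, fun k => by linarith [hf1 k]⟩
    have h1 : limsup g atTop ≤ limsup (fun k => f k + ε) atTop :=
      limsup_le_limsup hgf hgbb.isCoboundedUnder_le hfε_ba
    have h2 : limsup (fun k => f k + ε) atTop = limsup f atTop + ε :=
      limsup_add_const atTop f ε hfba hfbb.isCoboundedUnder_le
    linarith

end Stmt9Aux

/-- Adding \sum_{j ∈ S} 2^{-j} for an infinite density-zero set S does not decrease
the lower (resp. upper) frequency of the digit 0. -/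
theorem stmt_9 (S : Set ℕ) [DecidablePred (· ∈ S)] (hS : S.Infinite)
    (hdens : Tendsto
      (fun k : ℕ => ((((Finset.Icc 1 k).filter fun i => i ∈ S).card : ℝ) / k))
      atTop (nhds 0))
    (x c : ℝ) :
    (dMinus x 0 = c → c ≤ dMinus (x + ∑' j : S, (2 : ℝ) ^ (-(j : ℤ))) 0) ∧
    (dPlus x 0 = c → c ≤ dPlus (x + ∑' j : S, (2 : ℝ) ^ (-(j : ℤ))) 0) := by
  have hy : (∑' j : S, (2 : ℝ) ^ (-(j : ℤ))) = Stmt9Aux.y S := rfl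
  rw [hy]
  set x' : ℝ := x + Stmt9Aux.y S with hx'
  let g : ℕ → ℝ := fun k => (digitCount x 0 k : ℝ) / k
  let f : ℕ → ℝ := fun k => (digitCount x' 0 k : ℝ) / k
  let e : ℕ → ℝ := fun k =>
    2 * ((((Finset.Icc 1 k).filter fun i => i ∈ S).card : ℝ) / k) + 1 / k
  have hdc_le : ∀ (z : ℝ) (k : ℕ), digitCount z 0 k ≤ k := by
    intro z k
    calc digitCount z 0 k ≤ (Finset.Icc 1 k).card := Finset.card_filter_le _ _
      _ = k := by simp
  have hfg : ∀ k, g k ≤ f k + e k := by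
    intro k
    rcases Nat.eq_zero_or_pos k with rfl | hk
    · simp [g, f, e, digitCount]
    · have hkey := Stmt9Aux.key hS x k
      have hkR : (0:ℝ) < k := by exact_mod_cast hk
      set ck : ℕ := ((Finset.Icc 1 k).filter fun i => i ∈ S).card with hck
      have hcast : (digitCount x 0 k : ℝ) ≤ (digitCount x' 0 k : ℝ) + 2 * (ck : ℝ) + 1 := by
        exact_mod_cast hkey
      have h1 : g k ≤ ((digitCount x' 0 k : ℝ) + 2 * (ck : ℝ) + 1) / k := by
        apply div_le_div_of_nonneg_right hcast hkR.le
      have h2 : ((digitCount x' 0 k : ℝ) + 2 * (ck : ℝ) + 1) / k = f k + e k := by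
        show _ = (digitCount x' 0 k : ℝ) / k + (2 * ((ck : ℝ) / k) + 1 / k)
        field_simp
        ring
      rw [h2] at h1
      exact h1
  have he : Tendsto e atTop (nhds 0) := by
    have h2 := (hdens.const_mul 2).add tendsto_one_div_atTop_nhds_zero_nat
    show Tendsto (fun k : ℕ =>
      2 * ((((Finset.Icc 1 k).filter fun i => i ∈ S).card : ℝ) / k) + 1 / k) atTop (nhds 0)
    simpa using h2
  have hf0 : ∀ k, 0 ≤ f k := fun k => by positivity
  have hg0 : ∀ k, 0 ≤ g k := fun k => by positivity
  have hf1 : ∀ k, f k ≤ 1 := by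
    intro k
    rcases Nat.eq_zero_or_pos k with rfl | hk
    · simp [f, digitCount]
    · have hkR : (0:ℝ) < k := by exact_mod_cast hk
      rw [div_le_one hkR]
      exact_mod_cast hdc_le x' k
  have hg1 : ∀ k, g k ≤ 1 := by
    intro k
    rcases Nat.eq_zero_or_pos k with rfl | hk
    · simp [g, digitCount]
    · have hkR : (0:ℝ) < k := by exact_mod_cast hk
      rw [div_le_one hkR]
      exact_mod_cast hdc_le x k
  obtain ⟨hli, hls⟩ := Stmt9Aux.lim_compare f g e hfg he hf0 hf1 hg0 hg1
  constructor
  · intro hc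
    rw [← hc]
    exact hli
  · intro hc
    rw [← hc]
    exact hls
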